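/- Let (S, 𝒜, μ) be a complete finite measure space, H̃ a separable real Hilbert space, U ⊆ H̃ a nonempty closed set, ū : S → H̃ a measurable map with ū(s) ∈ U for a.e. s, and φ ∈ L²(S, μ; H̃). Suppose that for every v ∈ L²(S, μ; H̃) with v(s) ∈ T_U(ū(s)) for a.e. s one has ∫_S ⟨φ(s), v(s)⟩ dμ(s) ≤ 0. Then for a.e. s ∈ S, φ(s) ∈ N_U(ū(s)), i.e., ⟨φ(s), v⟩ ≤ 0 for every v ∈ T_U(ū(s)). -/

import Mathlib

open Filter Topology Metric MeasureTheory Set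
open scoped RealInnerProductSpace
open scoped RealInnerProductSpace

/-- The adjacent (intermediate) tangent cone to `K` at `x`. -/
def adjacentCone {X : Type*} [NormedAddCommGroup X] [NormedSpace ℝ X]
    (K : Set X) (x : X) : Set X :=
  {v | Tendsto (fun ε : ℝ => infDist (x + ε • v) K / ε) (𝓝[>] (0 : ℝ)) (𝓝 0)}

section ConeLemmas
variable {X : Type*} [NormedAddCommGroup X] [NormedSpace ℝ X] {K : Set X} {x : X}

lemma ACP.zero_mem (hx : x ∈ K) : (0 : X) ∈ adjacentCone K x := by
  have h : (fun ε : ℝ => infDist (x + ε • (0:X)) K / ε) = fun _ => (0:ℝ) := by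
    funext ε
    simp [infDist_zero_of_mem hx]
  show Tendsto _ _ _
  rw [h]
  exact tendsto_const_nhds

lemma ACP.smul_mem {c : ℝ} (hc : 0 < c) {w : X} (hw : w ∈ adjacentCone K x) :
    c • w ∈ adjacentCone K x := by
  have hmap : Tendsto (fun ε : ℝ => ε * c) (𝓝[>] (0:ℝ)) (𝓝[>] (0:ℝ)) := by
    apply tendsto_nhdsWithin_of_tendsto_nhds_of_eventually_within
    · have h0 : Tendsto (fun ε : ℝ => ε * c) (𝓝 0) (𝓝 0) := by
        simpa using ((continuous_mul_right c).tendsto (0:ℝ))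
      exact h0.mono_left nhdsWithin_le_nhds
    · filter_upwards [self_mem_nhdsWithin] with ε (hε : 0 < ε)
      exact mul_pos hε hc
  have h1 : Tendsto (fun ε : ℝ => c * (infDist (x + (ε * c) • w) K / (ε * c)))
      (𝓝[>] (0:ℝ)) (𝓝 0) := by
    simpa using (hw.comp hmap).const_mul c
  refine h1.congr' ?_
  filter_upwards [self_mem_nhdsWithin] with ε (hε : 0 < ε)
  have hεc : ε * c ≠ 0 := (mul_pos hε hc).ne'
  have : (ε * c) • w = ε • (c • w) := by rw [mul_smul]
  rw [this]
  field_simp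

lemma ACP.measurableSet_graph [SecondCountableTopology X] [MeasurableSpace X] [OpensMeasurableSpace X] :
    MeasurableSet {p : X × X | p.2 ∈ adjacentCone K p.1} := by
  have hset : {p : X × X | p.2 ∈ adjacentCone K p.1} =
      ⋂ (n : ℕ), ⋃ (m : ℕ), {p : X × X | ∀ ε : ℝ, 0 < ε → ε ≤ 1/(m+1) →
        infDist (p.1 + ε • p.2) K ≤ ε / (n+1)} := by
    ext ⟨x, v⟩
    simp only [Set.mem_setOf_eq, Set.mem_iInter, Set.mem_iUnion]
    constructor
    · intro h n
      rw [adjacentCone, Set.mem_setOf_eq, Metric.tendsto_nhdsWithin_nhds] at h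
      obtain ⟨δ, hδ, hh⟩ := h (1/(n+1)) (by positivity)
      obtain ⟨m, hm⟩ := exists_nat_one_div_lt hδ
      refine ⟨m, fun ε hε hε' => ?_⟩
      have h2 := hh (Set.mem_Ioi.mpr hε) (by
        rw [Real.dist_eq, sub_zero, abs_of_pos hε]
        exact lt_of_le_of_lt hε' (by exact_mod_cast hm))
      rw [Real.dist_eq, sub_zero,
        abs_of_nonneg (div_nonneg infDist_nonneg hε.le)] at h2
      rw [div_lt_div_iff₀ hε (by positivity)] at h2
      rw [le_div_iff₀ (by positivity : (0:ℝ) < (n:ℝ)+1)]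
      nlinarith
    · intro h
      rw [adjacentCone, Set.mem_setOf_eq, Metric.tendsto_nhdsWithin_nhds]
      intro η hη
      obtain ⟨n, hn⟩ := exists_nat_one_div_lt hη
      obtain ⟨m, hm⟩ := h n
      refine ⟨1/(m+1), by positivity, fun ε hε hd => ?_⟩
      have hε0 : (0:ℝ) < ε := hε
      rw [Real.dist_eq, sub_zero, abs_of_pos hε0] at hd
      have h3 := hm ε hε0 hd.le
      rw [Real.dist_eq, sub_zero, abs_of_nonneg (div_nonneg infDist_nonneg hε0.le)]
      calc infDist (x + ε • v) K / ε ≤ (ε/((n:ℝ)+1))/ε :=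
            div_le_div_of_nonneg_right h3 hε0.le
        _ = 1/((n:ℝ)+1) := by field_simp
        _ < η := by exact_mod_cast hn
  rw [hset]
  refine MeasurableSet.iInter fun n => MeasurableSet.iUnion fun m => ?_
  have : IsClosed {p : X × X | ∀ ε : ℝ, 0 < ε → ε ≤ 1/(m+1) →
      infDist (p.1 + ε • p.2) K ≤ ε / (n+1)} := by
    have : {p : X × X | ∀ ε : ℝ, 0 < ε → ε ≤ 1/(m+1) →
        infDist (p.1 + ε • p.2) K ≤ ε / (n+1)} =
        ⋂ (ε : ℝ) (_ : 0 < ε) (_ : ε ≤ 1/(m+1)),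
          {p : X × X | infDist (p.1 + ε • p.2) K ≤ ε / (n+1)} := by
      ext p; simp
    rw [this]
    refine isClosed_iInter fun ε => isClosed_iInter fun hε => isClosed_iInter fun hε' => ?_
    exact isClosed_le ((continuous_infDist_pt K).comp
      (continuous_fst.add ((continuous_const (y := ε)).smul continuous_snd)))
      (continuous_const)
  exact this.measurableSet
end ConeLemmas
section Castaing
variable {Z W : Type*} [TopologicalSpace Z] [T2Space Z] [MeasurableSpace Z]
  [OpensMeasurableSpace Z] [MetricSpace W] [CompleteSpace W] [SecondCountableTopology W]
  [MeasurableSpace W] [BorelSpace W] [Nonempty W]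

/-- Measurability of the set where the `sInf` of indices satisfying a measurable family of
conditions equals a given value. -/
lemma ACP.measurableSet_sInf_eq {A : ℕ → Set Z} (hA : ∀ j, MeasurableSet (A j)) (j : ℕ) :
    MeasurableSet {z | sInf {j' | z ∈ A j'} = j} := by
  rcases Nat.eq_zero_or_pos j with rfl | hj
  · have : {z | sInf {j' | z ∈ A j'} = 0} = A 0 ∪ ⋂ i, (A i)ᶜ := by
      ext z
      simp only [Set.mem_setOf_eq, Set.mem_union, Set.mem_iInter, Set.mem_compl_iff]
      rw [Nat.sInf_eq_zero]
      constructor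
      · rintro (h0 | hemp)
        · exact Or.inl h0
        · refine Or.inr fun i hi => ?_
          have : i ∈ {j' | z ∈ A j'} := hi
          rw [hemp] at this
          exact this
      · rintro (h0 | hall)
        · exact Or.inl h0
        · right
          ext i
          simp only [Set.mem_setOf_eq, Set.mem_empty_iff_false, iff_false]
          exact hall i
    rw [this]
    exact (hA 0).union (MeasurableSet.iInter fun i => (hA i).compl)
  · have : {z | sInf {j' | z ∈ A j'} = j} = A j ∩ ⋂ i ∈ Finset.range j, (A i)ᶜ := by
      ext z
      simp only [Set.mem_setOf_eq, Set.mem_inter_iff, Set.mem_iInter, Set.mem_compl_iff,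
        Finset.mem_range]
      constructor
      · intro h
        have hne : {j' | z ∈ A j'}.Nonempty := by
          by_contra hemp
          rw [Set.not_nonempty_iff_eq_empty] at hemp
          rw [hemp, Nat.sInf_empty] at h
          omega
        constructor
        · have := Nat.sInf_mem hne
          rwa [h] at this
        · intro i hi
          exact Nat.notMem_of_lt_sInf (h ▸ hi)
      · rintro ⟨hm, hlt⟩
        have h1 : sInf {j' | z ∈ A j'} ≤ j := Nat.sInf_le hm
        have h2 : sInf {j' | z ∈ A j'} ∈ {j' | z ∈ A j'} := Nat.sInf_mem ⟨j, hm⟩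
        rcases lt_or_eq_of_le h1 with h | h
        · exact absurd h2 (hlt _ h)
        · exact h
    rw [this]
    exact (hA j).inter (MeasurableSet.biInter (Finset.range j).countable_toSet
      fun i _ => (hA i).compl)

/-- A Castaing-type measurable selection for a compact subset of a product space. -/
lemma ACP.castaing {K : Set (Z × W)} (hK : IsCompact K) :
    ∃ v : Z → W, Measurable v ∧ ∀ z ∈ Prod.fst '' K, (z, v z) ∈ K := by
  classical
  obtain ⟨d, hd⟩ := TopologicalSpace.exists_dense_seq W
  set r : ℕ → ℝ := fun k => (1/2 : ℝ)^k with hrdef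
  have hrpos : ∀ k, 0 < r k := fun k => by positivity
  set CB : (ℕ → ℕ) → ℕ → Set W :=
    fun l k => ⋂ i ∈ Finset.range k, closedBall (d (l i)) (r i) with hCBdef
  set SS : (ℕ → ℕ) → ℕ → ℕ → Set Z := fun l k j =>
    Prod.fst '' (K ∩ {p | p.2 ∈ CB l k ∩ closedBall (d j) (r k)}) with hSSdef
  set step : (ℕ → ℕ) → ℕ → Z → ℕ := fun l k z => sInf {j | z ∈ SS l k j} with hstepdef
  set G : Z → ℕ → (ℕ → ℕ) := fun z k =>
    Nat.rec (fun _ => 0) (fun k ih => Function.update ih k (step ih k z)) k with hGdef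
  set c : Z → ℕ → ℕ := fun z k => G z (k+1) k with hcdef
  have hGs : ∀ z k, G z (k+1) = Function.update (G z k) k (step (G z k) k z) := fun z k => rfl
  have hc_eq : ∀ z k, c z k = step (G z k) k z := by
    intro z k
    show (Function.update (G z k) k (step (G z k) k z)) k = _
    simp
  -- junk lemma
  have hGjunk : ∀ z k i, k ≤ i → G z k i = 0 := by
    intro z k
    induction k with
    | zero => intro i _; rfl
    | succ k ih =>
      intro i hi
      rw [hGs]
      rw [Function.update_of_ne (by omega)]
      exact ih i (by omega)
  have hGstab : ∀ z k i, i < k → G z k i = c z i := by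
    intro z k
    induction k with
    | zero => omega
    | succ k ih =>
      intro i hi
      rcases Nat.lt_succ_iff_lt_or_eq.mp hi with h | rfl
      · rw [hGs, Function.update_of_ne (by omega)]
        exact ih i h
      · rfl
  -- CB facts
  have hCBcongr : ∀ (l l' : ℕ → ℕ) k, (∀ i < k, l i = l' i) → CB l k = CB l' k := by
    intro l l' k h
    apply Set.iInter₂_congr
    intro i hi
    rw [h i (Finset.mem_range.mp hi)]
  have hCB0 : ∀ l, CB l 0 = Set.univ := by intro l; simp [hCBdef]
  have hCBs : ∀ l k, CB l (k+1) = CB l k ∩ closedBall (d (l k)) (r k) := by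
    intro l k
    rw [hCBdef]
    simp only
    rw [Finset.range_add_one, Finset.set_biInter_insert, Set.inter_comm]
  have hCBclosed : ∀ l k, IsClosed (CB l k) :=
    fun l k => isClosed_biInter fun i _ => isClosed_closedBall
  -- SS measurable
  have hSSmeas : ∀ l k j, MeasurableSet (SS l k j) := by
    intro l k j
    have hcl : IsClosed {p : Z × W | p.2 ∈ CB l k ∩ closedBall (d j) (r k)} :=
      ((hCBclosed l k).inter isClosed_closedBall).preimage continuous_snd
    exact (((hK.inter_right hcl).image continuous_fst).isClosed).measurableSet
  -- G measurable fibers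
  have hGmeas : ∀ k (l : ℕ → ℕ), MeasurableSet {z | G z k = l} := by
    intro k
    induction k with
    | zero =>
      intro l
      by_cases hl : l = fun _ => 0
      · subst hl
        convert MeasurableSet.univ
        ext z
        simp only [Set.mem_setOf_eq, Set.mem_univ, iff_true]
        rfl
      · convert MeasurableSet.empty
        ext z
        simp only [Set.mem_setOf_eq, Set.mem_empty_iff_false, iff_false]
        intro h
        exact hl (h ▸ rfl)
    | succ k ih =>
      intro l
      by_cases hl : ∀ i, k+1 ≤ i → l i = 0
      · have heq : {z | G z (k+1) = l} =
            {z | G z k = Function.update l k 0} ∩ {z | step (Function.update l k 0) k z = l k} := by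
          ext z
          simp only [Set.mem_setOf_eq, Set.mem_inter_iff]
          constructor
          · intro h
            have h1 : G z k = Function.update l k 0 := by
              funext i
              rcases lt_trichotomy i k with hik | rfl | hik
              · rw [Function.update_of_ne (by omega)]
                have := hGs z k
                have h2 : G z (k+1) i = G z k i := by
                  rw [hGs, Function.update_of_ne (by omega)]
                rw [← h2, h]
              · simp only [Function.update_self]
                exact hGjunk _ _ _ le_rfl
              · rw [Function.update_of_ne (by omega), hGjunk z k i (by omega),
                  hl i (by omega)]
            refine ⟨h1, ?_⟩
            rw [← h1, ← hc_eq]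
            show c z k = l k
            rw [hcdef]
            simp only
            rw [h]
          · rintro ⟨h1, h2⟩
            rw [hGs, h1, h2]
            funext i
            rcases eq_or_ne i k with rfl | hik
            · simp
            · rw [Function.update_of_ne hik, Function.update_of_ne hik]
        rw [heq]
        exact (ih _).inter (ACP.measurableSet_sInf_eq (hSSmeas _ k) (l k))
      · convert MeasurableSet.empty
        ext z
        simp only [Set.mem_setOf_eq, Set.mem_empty_iff_false, iff_false]
        intro h
        push_neg at hl
        obtain ⟨i, hi1, hi2⟩ := hl
        exact hi2 (h ▸ hGjunk z (k+1) i hi1)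
  have hcmeas : ∀ k, Measurable fun z => c z k := by
    intro k
    apply measurable_to_countable'
    intro j
    have heq : {z | c z k = j} = ⋃ l ∈ Set.range (fun v : Fin k → ℕ =>
        (fun i => if h : i < k then v ⟨i, h⟩ else 0 : ℕ → ℕ)),
        ({z | G z k = l} ∩ {z | step l k z = j}) := by
      ext z
      simp only [Set.mem_setOf_eq, Set.mem_iUnion, Set.mem_inter_iff, Set.mem_range]
      constructor
      · intro h
        refine ⟨G z k, ⟨fun i => G z k i, ?_⟩, rfl, by rw [← hc_eq]; exact h⟩
        funext i
        by_cases hik : i < k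
        · simp [hik]
        · simp [hik, hGjunk z k i (by omega)]
      · rintro ⟨l, _, h1, h2⟩
        rw [hc_eq, h1]
        exact h2
    have : MeasurableSet {z | c z k = j} := by
      rw [heq]
      exact MeasurableSet.biUnion (Set.countable_range _)
        (fun l _ => (hGmeas k l).inter (ACP.measurableSet_sInf_eq (hSSmeas l k) j))
    exact this
  -- approximations
  set a : ℕ → Z → W := fun k z => d (c z k) with hadef
  have hameas : ∀ k, Measurable (a k) := fun k => measurable_from_nat.comp (hcmeas k)
  -- invariant for z in the projection
  have hInv : ∀ z ∈ Prod.fst '' K, ∀ k, ({w | (z, w) ∈ K} ∩ CB (c z) k).Nonempty := by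
    rintro z hz k
    induction k with
    | zero =>
      obtain ⟨p, hp, rfl⟩ := hz
      exact ⟨p.2, by simpa [hCB0] using hp⟩
    | succ k ih =>
      obtain ⟨w, hwK, hwCB⟩ := ih
      obtain ⟨j, hj⟩ := hd.exists_dist_lt w (hrpos k)
      have hCBG : CB (G z k) k = CB (c z) k := hCBcongr _ _ _ (fun i hi => hGstab z k i hi)
      have hzj : z ∈ SS (G z k) k j :=
        ⟨(z, w), ⟨hwK, by rw [hCBG]; exact ⟨hwCB, mem_closedBall.mpr hj.le⟩⟩, rfl⟩
      have hne : {j' | z ∈ SS (G z k) k j'}.Nonempty := ⟨j, hzj⟩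
      have hmem : z ∈ SS (G z k) k (c z k) := by
        rw [hc_eq]
        exact Nat.sInf_mem hne
      obtain ⟨p, ⟨hpK, hpCB, hpball⟩, hpz⟩ := hmem
      refine ⟨p.2, ?_, ?_⟩
      · show (z, p.2) ∈ K
        rw [← hpz]
        exact hpK
      · rw [hCBs]
        exact ⟨by rwa [hCBG] at hpCB, hpball⟩
  -- GOOD set
  set GOOD : Set Z := {z | ∀ k, dist (a k z) (a (k+1) z) ≤ 2 * r k} with hGOODdef
  have hGOODmeas : MeasurableSet GOOD := by
    have : GOOD = ⋂ k, {z | dist (a k z) (a (k+1) z) ≤ 2 * r k} := by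
      ext z; simp [hGOODdef]
    rw [this]
    exact MeasurableSet.iInter fun k =>
      measurableSet_le (((hameas k).dist (hameas (k+1)))) measurable_const
  -- limit points for z in projection
  have hlim : ∀ z ∈ Prod.fst '' K, ∃ w, (z, w) ∈ K ∧ ∀ k, dist w (a k z) ≤ r k := by
    intro z hz
    set F : ℕ → Set W := fun k => {w | (z, w) ∈ K} ∩ CB (c z) k with hFdef
    have hsect : IsCompact {w | (z, w) ∈ K} := by
      have : {w | (z, w) ∈ K} = Prod.snd '' (K ∩ ({z} ×ˢ Set.univ)) := by
        ext w
        simp only [Set.mem_setOf_eq, Set.mem_image, Set.mem_inter_iff, Set.mem_prod,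
          Set.mem_singleton_iff, Set.mem_univ, and_true]
        constructor
        · intro h; exact ⟨(z, w), ⟨h, rfl⟩, rfl⟩
        · rintro ⟨p, ⟨hp, hp1⟩, rfl⟩
          rwa [← hp1]
      rw [this]
      exact (hK.inter_right (isClosed_singleton.prod isClosed_univ)).image continuous_snd
    have hdec : ∀ k, F (k+1) ⊆ F k := by
      intro k
      apply Set.inter_subset_inter_right
      rw [hCBs]
      exact Set.inter_subset_left
    have hne : ∀ k, (F k).Nonempty := hInv z hz
    have hcl : ∀ k, IsClosed (F k) :=
      fun k => (hK.isClosed.preimage (Continuous.prodMk_right z)).inter (hCBclosed _ _)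
    have hcpt : IsCompact (F 0) := hsect.inter_right (hCBclosed _ _)
    obtain ⟨w, hw⟩ := IsCompact.nonempty_iInter_of_sequence_nonempty_isCompact_isClosed
      F hdec hne hcpt hcl
    have hwk : ∀ k, w ∈ F k := fun k => Set.mem_iInter.mp hw k
    refine ⟨w, (hwk 0).1, fun k => ?_⟩
    have := (hwk (k+1)).2
    rw [hCBs] at this
    exact mem_closedBall.mp this.2
  have hQG : Prod.fst '' K ⊆ GOOD := by
    intro z hz
    obtain ⟨w, _, hw⟩ := hlim z hz
    intro k
    calc dist (a k z) (a (k+1) z) ≤ dist (a k z) w + dist w (a (k+1) z) := dist_triangle _ _ _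
      _ ≤ r k + r (k+1) := by
          rw [dist_comm (a k z) w]
          exact add_le_add (hw k) (hw (k+1))
      _ ≤ 2 * r k := by
          rw [hrdef]
          simp only [pow_succ]
          nlinarith [hrpos k]
  -- globally convergent approximations
  set b : ℕ → Z → W := fun k z => if z ∈ GOOD then a k z else d 0 with hbdef
  have hbmeas : ∀ k, Measurable (b k) := fun k => Measurable.ite hGOODmeas (hameas k)
    measurable_const
  have hconv : ∀ z, ∃ w, Tendsto (fun k => b k z) atTop (𝓝 w) := by
    intro z
    by_cases hz : z ∈ GOOD
    · have hb : ∀ k, b k z = a k z := fun k => if_pos hz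
      have hzG : ∀ k, dist (a k z) (a (k+1) z) ≤ 2 * r k := hz
      have hcauchy : CauchySeq (fun k => b k z) := by
        apply cauchySeq_of_le_geometric (1/2 : ℝ) 2 (by norm_num)
        intro n
        rw [hb n, hb (n+1)]
        exact hzG n
      exact cauchySeq_tendsto_of_complete hcauchy
    · refine ⟨d 0, ?_⟩
      have hb : ∀ k, b k z = d 0 := fun k => if_neg hz
      simp only [hb]
      exact tendsto_const_nhds
  set v : Z → W := fun z => limUnder atTop (fun k => b k z) with hvdef
  have hvt : ∀ z, Tendsto (fun k => b k z) atTop (𝓝 (v z)) := by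
    intro z
    have h := (hconv z).choose_spec
    have : v z = (hconv z).choose := h.limUnder_eq
    rw [this]
    exact h
  have hvmeas : Measurable v :=
    measurable_of_tendsto_metrizable hbmeas (tendsto_pi_nhds.mpr hvt)
  refine ⟨v, hvmeas, ?_⟩
  intro z hz
  obtain ⟨w, hwK, hw⟩ := hlim z hz
  have hat : Tendsto (fun k => a k z) atTop (𝓝 w) := by
    rw [tendsto_iff_dist_tendsto_zero]
    exact squeeze_zero (g := fun k => (1/2:ℝ)^k) (fun k => dist_nonneg)
      (fun k => le_trans (dist_comm (a k z) w).le (hw k))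
      (tendsto_pow_atTop_nhds_zero_of_lt_one (by norm_num) (by norm_num))
  have hbt : Tendsto (fun k => b k z) atTop (𝓝 w) := by
    have : (fun k => b k z) = fun k => a k z := by
      funext k
      exact if_pos (hQG hz)
    rw [this]
    exact hat
  have : v z = w := tendsto_nhds_unique (hvt z) hbt
  rw [this]
  exact hwK
end Castaing
lemma ACP.exists_compact_of_range {Z W : Type*}
    [TopologicalSpace Z] [T2Space Z] [MeasurableSpace Z] [OpensMeasurableSpace Z]
    [TopologicalSpace W]
    (ρ : Measure Z) [IsFiniteMeasure ρ] [ρ.OuterRegular]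
    {E : Set (Z × W)} (g : (ℕ → ℕ) → Z × W) (hg : Continuous g) (hrange : Set.range g = E)
    (hpos : ρ (Prod.fst '' E) ≠ 0) :
    ∃ K, K ⊆ E ∧ IsCompact K ∧ MeasurableSet (Prod.fst '' K) ∧ ρ (Prod.fst '' K) ≠ 0 := by
  classical
  set γ : Set (ℕ → ℕ) → ENNReal := fun M => ρ (Prod.fst '' (g '' M)) with hγdef
  set c : ENNReal := γ Set.univ with hcdef
  have hc0 : c ≠ 0 := by
    rw [hcdef, hγdef]
    simpa [Set.image_univ, hrange] using hpos
  have hcfin : c ≠ ⊤ := (lt_of_le_of_lt (measure_mono (Set.subset_univ _))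
    (measure_lt_top ρ Set.univ)).ne
  set thr : ℕ → ENNReal := fun k => c/2 + c/2^(k+1) with hthrdef
  have hpowne : ∀ k : ℕ, ((2:ENNReal)^(k+1)) ≠ 0 := fun k => by positivity
  have hpownetop : ∀ k : ℕ, ((2:ENNReal)^(k+1)) ≠ ⊤ := fun k =>
    (ENNReal.pow_lt_top (by norm_num : (2:ENNReal) < ⊤)).ne
  have hpartpos : ∀ k, c/2^(k+1) ≠ 0 := fun k => by
    simp only [ne_eq, ENNReal.div_eq_zero_iff, not_or]
    exact ⟨hc0, hpownetop k⟩
  have hparttop : ∀ k, c/2^(k+1) ≠ ⊤ := fun k =>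
    (ENNReal.div_lt_top hcfin (hpowne k)).ne
  have hhalftop : c/2 ≠ ⊤ := (ENNReal.div_lt_top hcfin (by norm_num)).ne
  have hthr0 : thr 0 = c := by
    rw [hthrdef]
    simp only [zero_add, pow_one]
    exact ENNReal.add_halves c
  have hthrdec : ∀ k, thr (k+1) < thr k := by
    intro k
    rw [hthrdef]
    apply ENNReal.add_lt_add_left hhalftop
    have h1 : c/2^(k+1+1) = (c/2^(k+1))/2 := by
      rw [pow_succ, div_eq_mul_inv, ENNReal.mul_inv (Or.inl (hpowne k)) (Or.inl (hpownetop k)),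
        ← mul_assoc, ← div_eq_mul_inv, ← div_eq_mul_inv]
    rw [h1]
    exact ENNReal.half_lt_self (hpartpos k) (hparttop k)
  have hthrgt : ∀ k, c/2 < thr k := fun k =>
    ENNReal.lt_add_right hhalftop (hpartpos k)
  -- prefix cylinders
  set Sig : (ℕ → ℕ) → ℕ → Set (ℕ → ℕ) := fun l k => {σ | ∀ i < k, σ i ≤ l i} with hSigdef
  have hSig0 : ∀ l, Sig l 0 = Set.univ := by
    intro l; ext σ; simp [hSigdef]
  have hSplit : ∀ l k m, Sig l k ∩ {σ | σ k ≤ m} = Sig (Function.update l k m) (k+1) := by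
    intro l k m
    ext σ
    simp only [hSigdef, Set.mem_inter_iff, Set.mem_setOf_eq]
    constructor
    · rintro ⟨h1, h2⟩ i hi
      rcases Nat.lt_succ_iff_lt_or_eq.mp hi with h | rfl
      · rw [Function.update_of_ne (by omega)]; exact h1 i h
      · rw [Function.update_self]; exact h2
    · intro h
      constructor
      · intro i hi
        have := h i (by omega)
        rwa [Function.update_of_ne (by omega)] at this
      · have := h k (by omega)
        rwa [Function.update_self] at this
  have hUnionSig : ∀ l k, Sig l k = ⋃ m, Sig (Function.update l k m) (k+1) := by
    intro l k
    ext σ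
    simp only [Set.mem_iUnion, ← hSplit, Set.mem_inter_iff, Set.mem_setOf_eq]
    constructor
    · intro h; exact ⟨σ k, h, le_rfl⟩
    · rintro ⟨m, h, _⟩; exact h
  have hγUnion : ∀ l k, γ (Sig l k) = ⨆ m, γ (Sig (Function.update l k m) (k+1)) := by
    intro l k
    rw [hUnionSig l k, hγdef]
    simp only [Set.image_iUnion]
    apply Monotone.measure_iUnion
    intro m m' hmm'
    apply Set.image_mono
    apply Set.image_mono
    intro σ hσ i hi
    rcases Nat.lt_succ_iff_lt_or_eq.mp hi with h | rfl
    · have := hσ i (by omega)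
      rwa [Function.update_of_ne (by omega)] at this ⊢
    · rw [Function.update_self]
      have := hσ i (by omega)
      rw [Function.update_self] at this
      omega
  -- greedy choice
  set next : (ℕ → ℕ) → ℕ → ℕ := fun l k =>
    sInf {m | thr (k+1) < γ (Sig (Function.update l k m) (k+1))} with hnextdef
  set G : ℕ → (ℕ → ℕ) := fun k =>
    Nat.rec (fun _ => 0) (fun k ih => Function.update ih k (next ih k)) k with hGdef
  have hGs : ∀ k, G (k+1) = Function.update (G k) k (next (G k) k) := fun k => rfl
  have hInv : ∀ k, thr k ≤ γ (Sig (G k) k) := by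
    intro k
    induction k with
    | zero =>
      rw [hSig0, hthr0]
    | succ k ih =>
      have hlt : thr (k+1) < ⨆ m, γ (Sig (Function.update (G k) k m) (k+1)) := by
        rw [← hγUnion]
        exact lt_of_lt_of_le (hthrdec k) ih
      rw [lt_iSup_iff] at hlt
      obtain ⟨m, hm⟩ := hlt
      have hne : {m | thr (k+1) < γ (Sig (Function.update (G k) k m) (k+1))}.Nonempty := ⟨m, hm⟩
      have := Nat.sInf_mem hne
      rw [hGs]
      exact le_of_lt this
  set n : ℕ → ℕ := fun i => G (i+1) i with hndef
  have hGstab : ∀ k i, i < k → G k i = n i := by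
    intro k
    induction k with
    | zero => omega
    | succ k ih =>
      intro i hi
      rcases Nat.lt_succ_iff_lt_or_eq.mp hi with h | rfl
      · rw [hGs, Function.update_of_ne (by omega)]
        exact ih i h
      · rfl
  have hSigG : ∀ k, Sig (G k) k = Sig n k := by
    intro k
    ext σ
    simp only [hSigdef, Set.mem_setOf_eq]
    constructor
    · intro h i hi
      rw [← hGstab k i hi]; exact h i hi
    · intro h i hi
      rw [hGstab k i hi]; exact h i hi
  have hn : ∀ k, thr k ≤ γ (Sig n k) := fun k => by rw [← hSigG]; exact hInv k
  -- the compact set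
  set T : Set (ℕ → ℕ) := {σ | ∀ i, σ i ≤ n i} with hTdef
  have hTcompact : IsCompact T := by
    have : T = Set.pi Set.univ (fun i => Set.Iic (n i)) := by
      ext σ
      simp only [hTdef, Set.mem_setOf_eq, Set.mem_univ_pi, Set.mem_Iic]
    rw [this]
    exact isCompact_univ_pi (fun i => (Set.finite_Iic (n i)).isCompact)
  set K : Set (Z × W) := g '' T with hKdef
  have hKcompact : IsCompact K := hTcompact.image hg
  have hKE : K ⊆ E := by
    rw [hKdef, ← hrange]
    exact Set.image_subset_range g T
  -- the open covering lemma
  have hopen : ∀ O : Set (Z × W), IsOpen O → K ⊆ O → ∃ k, g '' (Sig n k) ⊆ O := by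
    intro O hO hKO
    by_contra hcon
    push_neg at hcon
    have hex : ∀ k, ∃ σ ∈ Sig n k, g σ ∉ O := by
      intro k
      obtain ⟨x, hx, hxO⟩ := Set.not_subset.mp (hcon k)
      obtain ⟨σ, hσ, rfl⟩ := hx
      exact ⟨σ, hσ, hxO⟩
    choose σs hσs hσsO using hex
    set τ : ℕ → (ℕ → ℕ) := fun k i => min (σs k i) (n i) with hτdef
    have hτT : ∀ k, τ k ∈ T := fun k i => min_le_right _ _
    obtain ⟨σstar, hσstarT, ψ, hψmono, hψtend⟩ := hTcompact.isSeqCompact hτT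
    have hσtend : Tendsto (fun j => σs (ψ j)) atTop (𝓝 σstar) := by
      rw [tendsto_pi_nhds]
      intro i
      have h1 : Tendsto (fun j => τ (ψ j) i) atTop (𝓝 (σstar i)) := by
        rw [tendsto_pi_nhds] at hψtend
        exact hψtend i
      apply h1.congr'
      filter_upwards [eventually_ge_atTop (i+1)] with j hj
      have hij : i < ψ j := lt_of_lt_of_le (by omega) (hψmono.le_apply)
      rw [hτdef]
      simp only
      rw [min_eq_left (hσs (ψ j) i hij)]
    have hgtend : Tendsto (fun j => g (σs (ψ j))) atTop (𝓝 (g σstar)) :=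
      (hg.tendsto σstar).comp hσtend
    have hmem : g σstar ∈ O := hKO ⟨σstar, hσstarT, rfl⟩
    have := hgtend.eventually (hO.mem_nhds hmem)
    obtain ⟨j, hj⟩ := this.exists
    exact hσsO (ψ j) hj
  -- measure bound
  have hbound : ∀ O' : Set Z, Prod.fst '' K ⊆ O' → IsOpen O' → c/2 ≤ ρ O' := by
    intro O' hsub hO'
    have hKV : K ⊆ Prod.fst ⁻¹' O' := fun p hp => hsub ⟨p, hp, rfl⟩
    obtain ⟨k, hk⟩ := hopen _ (hO'.preimage continuous_fst) hKV
    have h1 : Prod.fst '' (g '' Sig n k) ⊆ O' := by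
      rintro x ⟨p, hp, rfl⟩
      exact hk hp
    calc c/2 ≤ thr k := (hthrgt k).le
      _ ≤ γ (Sig n k) := hn k
      _ ≤ ρ O' := measure_mono h1
  have hKmeas : MeasurableSet (Prod.fst '' K) :=
    ((hKcompact.image continuous_fst).isClosed).measurableSet
  refine ⟨K, hKE, hKcompact, hKmeas, ?_⟩
  have : c/2 ≤ ρ (Prod.fst '' K) := by
    rw [Set.measure_eq_iInf_isOpen]
    apply le_iInf
    intro O'
    apply le_iInf
    intro hsub
    apply le_iInf
    intro hO'
    exact hbound O' hsub hO'
  intro h0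
  rw [h0] at this
  simp only [le_zero_iff] at this
  exact hc0 (by
    have := ENNReal.div_eq_zero_iff.mp this
    rcases this with h | h
    · exact h
    · norm_num at h)

theorem integral_condition_implies_pointwise_normal_cone
    {S : Type*} [MeasurableSpace S] (μ : Measure S) [IsFiniteMeasure μ]
    (hcomplete : μ.IsComplete)
    {Ht : Type*} [NormedAddCommGroup Ht] [InnerProductSpace ℝ Ht] [CompleteSpace Ht]
    [SecondCountableTopology Ht] [MeasurableSpace Ht] [BorelSpace Ht]
    (U : Set Ht) (hUne : U.Nonempty) (hUcl : IsClosed U)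
    (ubar : S → Ht) (hubarm : Measurable ubar) (hubarU : ∀ᵐ s ∂μ, ubar s ∈ U)
    (φ : Lp Ht 2 μ)
    (hineq : ∀ v : Lp Ht 2 μ, (∀ᵐ s ∂μ, v s ∈ adjacentCone U (ubar s)) →
      ∫ s, ⟪φ s, v s⟫ ∂μ ≤ 0) :
    ∀ᵐ s ∂μ, ∀ w ∈ adjacentCone U (ubar s), ⟪φ s, w⟫ ≤ 0 := by
  classical
  have hφae : AEStronglyMeasurable (φ : S → Ht) μ := Lp.aestronglyMeasurable φ
  set φ' : S → Ht := hφae.mk _ with hφ'def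
  have hφ'meas : Measurable φ' := hφae.stronglyMeasurable_mk.measurable
  have hφeq : (φ : S → Ht) =ᵐ[μ] φ' := hφae.ae_eq_mk
  suffices h : ∀ᵐ s ∂μ, ∀ w ∈ adjacentCone U (ubar s), ⟪φ' s, w⟫ ≤ 0 by
    filter_upwards [h, hφeq] with s hs heq
    intro w hw
    rw [heq]
    exact hs w hw
  by_contra hcon
  set θ : S → Ht × Ht := fun s => (ubar s, φ' s) with hθdef
  have hθmeas : Measurable θ := hubarm.prodMk hφ'meas
  set ν : Measure (Ht × Ht) := Measure.map θ μ with hνdef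
  haveI : IsFiniteMeasure ν := ⟨by
    rw [hνdef, Measure.map_apply hθmeas MeasurableSet.univ]
    exact measure_lt_top μ _⟩
  set E : ℕ → Set ((Ht × Ht) × Ht) := fun k =>
    {q | ‖q.2‖ ≤ 1 ∧ 1/((k:ℝ)+1) ≤ ⟪q.1.2, q.2⟫ ∧ q.2 ∈ adjacentCone U q.1.1} with hEdef
  have hEmeas : ∀ k, MeasurableSet (E k) := by
    intro k
    have h1 : MeasurableSet {q : (Ht × Ht) × Ht | ‖q.2‖ ≤ 1} :=
      (isClosed_le (continuous_norm.comp continuous_snd) continuous_const).measurableSet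
    have h2 : MeasurableSet {q : (Ht × Ht) × Ht | 1/((k:ℝ)+1) ≤ ⟪q.1.2, q.2⟫} :=
      (isClosed_le continuous_const
        (Continuous.inner (continuous_snd.comp continuous_fst) continuous_snd)).measurableSet
    have h3 : MeasurableSet {q : (Ht × Ht) × Ht | q.2 ∈ adjacentCone U q.1.1} := by
      have hmap : Measurable (fun q : (Ht × Ht) × Ht => (q.1.1, q.2)) :=
        (measurable_fst.fst).prodMk measurable_snd
      exact hmap (ACP.measurableSet_graph (K := U))
    have : E k = {q : (Ht × Ht) × Ht | ‖q.2‖ ≤ 1} ∩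
        ({q : (Ht × Ht) × Ht | 1/((k:ℝ)+1) ≤ ⟪q.1.2, q.2⟫} ∩
        {q : (Ht × Ht) × Ht | q.2 ∈ adjacentCone U q.1.1}) := by
      ext q; simp [hEdef, Set.mem_setOf_eq, and_assoc]
    rw [this]
    exact h1.inter (h2.inter h3)
  set P : ℕ → Set (Ht × Ht) := fun k => Prod.fst '' (E k) with hPdef
  have hBad : {s | ¬ ∀ w ∈ adjacentCone U (ubar s), ⟪φ' s, w⟫ ≤ 0} ⊆ ⋃ k, θ ⁻¹' (P k) := by
    intro s hs
    simp only [Set.mem_setOf_eq] at hs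
    push_neg at hs
    obtain ⟨w, hw, hwpos⟩ := hs
    have hwne : w ≠ 0 := by
      intro h
      rw [h, inner_zero_right] at hwpos
      exact lt_irrefl _ hwpos
    have hnw : (0:ℝ) < ‖w‖ := norm_pos_iff.mpr hwne
    set c0 : ℝ := min 1 (1/‖w‖) with hc0def
    have hc0pos : 0 < c0 := lt_min one_pos (by positivity)
    have hw' : c0 • w ∈ adjacentCone U (ubar s) := ACP.smul_mem hc0pos hw
    have hnorm : ‖c0 • w‖ ≤ 1 := by
      rw [norm_smul, Real.norm_eq_abs, abs_of_pos hc0pos]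
      calc c0 * ‖w‖ ≤ (1/‖w‖) * ‖w‖ :=
            mul_le_mul_of_nonneg_right (min_le_right _ _) (norm_nonneg w)
        _ = 1 := by field_simp
    have hinner : 0 < ⟪φ' s, c0 • w⟫ := by
      rw [real_inner_smul_right]
      exact mul_pos hc0pos hwpos
    obtain ⟨k, hk⟩ := exists_nat_one_div_lt hinner
    refine Set.mem_iUnion.mpr ⟨k, ?_⟩
    show θ s ∈ P k
    exact ⟨(θ s, c0 • w), ⟨hnorm, hk.le, hw'⟩, rfl⟩
  have hμBad : μ {s | ¬ ∀ w ∈ adjacentCone U (ubar s), ⟪φ' s, w⟫ ≤ 0} ≠ 0 :=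
    fun h0 => hcon (ae_iff.mpr h0)
  have hPk : ∃ k, μ (θ ⁻¹' (P k)) ≠ 0 := by
    by_contra hall
    push_neg at hall
    exact hμBad (measure_mono_null hBad (measure_iUnion_null hall))
  obtain ⟨k, hμP⟩ := hPk
  have hνPk : ν (P k) ≠ 0 := by
    intro h0
    apply hμP
    apply le_antisymm _ (zero_le)
    calc μ (θ ⁻¹' P k) ≤ ν (P k) := Measure.le_map_apply hθmeas.aemeasurable _
      _ = 0 := h0
  have hana : AnalyticSet (E k) := (hEmeas k).analyticSet
  rw [AnalyticSet] at hana
  rcases hana with hE0 | ⟨g, hgcont, hgrange⟩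
  · rw [hPdef] at hνPk
    simp only [hE0, Set.image_empty, measure_empty, ne_eq, not_true_eq_false] at hνPk
  obtain ⟨K, hKE, hKcomp, hKmeas, hKpos⟩ :=
    ACP.exists_compact_of_range ν g hgcont hgrange hνPk
  obtain ⟨v0, hv0meas, hv0K⟩ := ACP.castaing hKcomp
  set A : Set (Ht × Ht) := Prod.fst '' K with hAdef
  set B : Set S := θ ⁻¹' A with hBdef
  have hBmeas : MeasurableSet B := hKmeas.preimage hθmeas
  have hμB : μ B ≠ 0 := by
    rw [hBdef, ← Measure.map_apply hθmeas hKmeas] at *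
    exact hKpos
  set vf : S → Ht := fun s => if θ s ∈ A then v0 (θ s) else 0 with hvfdef
  have hvfmeas : Measurable vf :=
    Measurable.ite (hKmeas.preimage hθmeas) (hv0meas.comp hθmeas) measurable_const
  have hvfE : ∀ s, θ s ∈ A → (θ s, v0 (θ s)) ∈ E k := fun s hs => hKE (hv0K _ hs)
  have hvfbound : ∀ s, ‖vf s‖ ≤ 1 := by
    intro s
    rw [hvfdef]
    by_cases h : θ s ∈ A
    · simp only [if_pos h]
      exact (hvfE s h).1
    · simp [if_neg h]
  have hmem2 : MemLp vf 2 μ :=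
    MemLp.of_bound hvfmeas.aestronglyMeasurable 1 (Eventually.of_forall hvfbound)
  set v : Lp Ht 2 μ := hmem2.toLp vf with hvdef
  have hveq : (v : S → Ht) =ᵐ[μ] vf := hmem2.coeFn_toLp
  have hcone : ∀ᵐ s ∂μ, (v : S → Ht) s ∈ adjacentCone U (ubar s) := by
    filter_upwards [hveq, hubarU] with s h1 h2
    rw [h1, hvfdef]
    by_cases h : θ s ∈ A
    · simp only [if_pos h]
      exact (hvfE s h).2.2
    · simp only [if_neg h]
      exact ACP.zero_mem h2
  have hle := hineq v hcone
  have hφ'L2 : MemLp φ' 2 μ := (Lp.memLp φ).ae_eq hφeq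
  have hφ'int : Integrable φ' μ :=
    memLp_one_iff_integrable.mp (hφ'L2.mono_exponent (by norm_num))
  set f : S → ℝ := fun s => ⟪φ' s, vf s⟫ with hfdef
  have hfmeas : Measurable f := hφ'meas.inner hvfmeas
  have hfint : Integrable f μ := by
    apply Integrable.mono' hφ'int.norm hfmeas.aestronglyMeasurable
    apply Eventually.of_forall
    intro s
    rw [hfdef]
    calc ‖⟪φ' s, vf s⟫‖ ≤ ‖φ' s‖ * ‖vf s‖ := by
          rw [Real.norm_eq_abs]
          exact abs_real_inner_le_norm _ _
      _ ≤ ‖φ' s‖ * 1 := mul_le_mul_of_nonneg_left (hvfbound s) (norm_nonneg _)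
      _ = ‖φ' s‖ := mul_one _
  have hint_eq : ∫ s, ⟪(φ : S → Ht) s, (v : S → Ht) s⟫ ∂μ = ∫ s, f s ∂μ := by
    apply integral_congr_ae
    filter_upwards [hφeq, hveq] with s h1 h2
    rw [hfdef, h1, h2]
  have hfB : ∀ s ∈ B, 1/((k:ℝ)+1) ≤ f s := by
    intro s hs
    have h := hvfE s hs
    rw [hfdef]
    simp only
    rw [hvfdef]
    simp only [if_pos (Set.mem_preimage.mp hs)]
    exact h.2.1
  have hsplit : ∫ s in B, f s ∂μ + ∫ s in Bᶜ, f s ∂μ = ∫ s, f s ∂μ :=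
    integral_add_compl hBmeas hfint
  have h2int : ∫ s in Bᶜ, f s ∂μ = 0 := by
    apply setIntegral_eq_zero_of_forall_eq_zero
    intro s hs
    rw [hfdef]
    simp only
    rw [hvfdef]
    have hns : θ s ∉ A := fun h => (Set.notMem_of_mem_compl hs) (Set.mem_preimage.mpr h)
    simp only [if_neg hns]
    exact inner_zero_right _
  have h3int : (1/((k:ℝ)+1)) * (μ B).toReal ≤ ∫ s in B, f s ∂μ :=
    setIntegral_ge_of_const_le_real hBmeas (measure_ne_top μ B) hfB hfint.integrableOn
  have hpos : 0 < ∫ s, f s ∂μ := by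
    rw [← hsplit, h2int, add_zero]
    refine lt_of_lt_of_le ?_ h3int
    apply mul_pos (by positivity)
    exact ENNReal.toReal_pos hμB (measure_ne_top μ B)
  rw [hint_eq] at hle
  linarith
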